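/- Fix n ≥ 1, a₁,…,aₙ > 0, ε > 0, and C ≥ 0. Let κ : ℝ^{2n} → ℝ be a measurable function such that |κ(Z) − 1| ≤ C |Z|² for all Z with |Z| ≤ 2ε. Then there exists C' > 0 such that for all real p ≥ 1, | ∫_{B(0,2ε)} pⁿ e^{−2p |Z|²_a} κ(Z) dZ − ∏ⱼ (2π/aⱼ) | ≤ C'/p, where B(0,2ε) is the Euclidean ball of radius 2ε in ℝ^{2n}, |Z|²_a = ¼ Σⱼ aⱼ |zⱼ|² with zⱼ = Z_{2j−1} + i Z_{2j}, and dZ is the Lebesgue measure. -/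

import Mathlib

open MeasureTheory Complex

/-- Gaussian integral over `ℂ`: integrability. -/
lemma integrable_gauss_c {b : ℝ} (hb : 0 < b) :
    Integrable (fun z : ℂ => Real.exp (-(b * Complex.normSq z))) := by
  have e := Complex.volume_preserving_equiv_real_prod.symm
  rw [← e.integrable_comp_emb (MeasurableEquiv.measurableEmbedding _)]
  have hf : Integrable (fun x : ℝ => Real.exp (-(b * x ^ 2))) := by
    simpa [neg_mul] using integrable_exp_neg_mul_sq hb
  have h2 := hf.mul_prod hf
  rw [← MeasureTheory.Measure.volume_eq_prod] at h2
  have key : ((fun z : ℂ => Real.exp (-(b * Complex.normSq z))) ∘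
      Complex.measurableEquivRealProd.symm)
      = fun p : ℝ × ℝ => Real.exp (-(b * p.1 ^ 2)) * Real.exp (-(b * p.2 ^ 2)) := by
    funext p
    simp only [Function.comp_apply, Complex.measurableEquivRealProd_symm_apply,
      Complex.normSq_mk, ← Real.exp_add]
    congr 1
    ring
  rw [key]
  exact h2

/-- Gaussian integral over `ℂ`: value. -/
lemma integral_gauss_c {b : ℝ} (hb : 0 < b) :
    ∫ z : ℂ, Real.exp (-(b * Complex.normSq z)) = Real.pi / b := by
  have e := Complex.volume_preserving_equiv_real_prod.symm
  rw [← e.integral_comp (MeasurableEquiv.measurableEmbedding _)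
    (fun z : ℂ => Real.exp (-(b * Complex.normSq z)))]
  have key : (fun p : ℝ × ℝ => Real.exp (-(b * Complex.normSq
      (Complex.measurableEquivRealProd.symm p))))
      = fun p : ℝ × ℝ => Real.exp (-(b * p.1 ^ 2)) * Real.exp (-(b * p.2 ^ 2)) := by
    funext p
    simp only [Complex.measurableEquivRealProd_symm_apply, Complex.normSq_mk, ← Real.exp_add]
    congr 1
    ring
  calc ∫ p : ℝ × ℝ, Real.exp (-(b * Complex.normSq (Complex.measurableEquivRealProd.symm p)))
      = ∫ p : ℝ × ℝ, Real.exp (-(b * p.1 ^ 2)) * Real.exp (-(b * p.2 ^ 2)) := by rw [key]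
    _ = (∫ x : ℝ, Real.exp (-(b * x ^ 2))) * ∫ x : ℝ, Real.exp (-(b * x ^ 2)) := by
        rw [MeasureTheory.Measure.volume_eq_prod]
        exact MeasureTheory.integral_prod_mul (fun x : ℝ => Real.exp (-(b * x ^ 2)))
          (fun x : ℝ => Real.exp (-(b * x ^ 2)))
    _ = Real.sqrt (Real.pi / b) * Real.sqrt (Real.pi / b) := by
        simp only [← neg_mul, integral_gaussian]
    _ = Real.pi / b := Real.mul_self_sqrt (div_nonneg Real.pi_pos.le hb.le)

/-- Gaussian integral over `ℂⁿ`: integrability. -/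
lemma integrable_gauss_pi {n : ℕ} {c : Fin n → ℝ} (hc : ∀ j, 0 < c j) :
    Integrable (fun Z : Fin n → ℂ => Real.exp (-(∑ j, c j * Complex.normSq (Z j)))) := by
  have h : (fun Z : Fin n → ℂ => Real.exp (-(∑ j, c j * Complex.normSq (Z j))))
      = fun Z => ∏ j, Real.exp (-(c j * Complex.normSq (Z j))) := by
    funext Z
    rw [← Real.exp_sum]
    congr 1
    rw [← Finset.sum_neg_distrib]
  rw [h]
  exact MeasureTheory.Integrable.fintype_prod (fun j => integrable_gauss_c (hc j))

/-- Gaussian integral over `ℂⁿ`: value. -/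
lemma integral_gauss_pi {n : ℕ} {c : Fin n → ℝ} (hc : ∀ j, 0 < c j) :
    ∫ Z : Fin n → ℂ, Real.exp (-(∑ j, c j * Complex.normSq (Z j)))
      = ∏ j, Real.pi / c j := by
  have h : (fun Z : Fin n → ℂ => Real.exp (-(∑ j, c j * Complex.normSq (Z j))))
      = fun Z => ∏ j, Real.exp (-(c j * Complex.normSq (Z j))) := by
    funext Z
    rw [← Real.exp_sum]
    congr 1
    rw [← Finset.sum_neg_distrib]
  rw [h, MeasureTheory.integral_fintype_prod_volume_eq_prod
    (f := fun j (z : ℂ) => Real.exp (-(c j * Complex.normSq z)))]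
  exact Finset.prod_congr rfl fun j _ => integral_gauss_c (hc j)

/-- Elementary inequality: `u e^{-u} ≤ e^{-u/2}` for `u ≥ 0`. -/
lemma ue_ineq {u : ℝ} (hu : 0 ≤ u) : u * Real.exp (-u) ≤ Real.exp (-(u / 2)) := by
  have h1 : u ≤ Real.exp (u / 2) := by
    have h2 : 1 + u / 4 ≤ Real.exp (u / 4) := by
      have := Real.add_one_le_exp (u / 4); linarith
    have h3 : Real.exp (u / 4) * Real.exp (u / 4) = Real.exp (u / 2) := by
      rw [← Real.exp_add]; ring_nf
    nlinarith [sq_nonneg (1 - u / 4), Real.exp_pos (u / 4)]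
  have h3 : Real.exp (-u) = Real.exp (-(u / 2)) * Real.exp (-(u / 2)) := by
    rw [← Real.exp_add]; ring_nf
  calc u * Real.exp (-u) = (u * Real.exp (-(u / 2))) * Real.exp (-(u / 2)) := by
        rw [h3]; ring
    _ ≤ (Real.exp (u / 2) * Real.exp (-(u / 2))) * Real.exp (-(u / 2)) := by
        have := mul_le_mul_of_nonneg_right h1 (Real.exp_pos (-(u / 2))).le
        exact mul_le_mul_of_nonneg_right this (Real.exp_pos _).le
    _ = Real.exp (-(u / 2)) := by
        rw [← Real.exp_add, ← Real.exp_add]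
        congr 1
        ring

/-- Fix `n ≥ 1`, `a₁,…,aₙ > 0`, `ε > 0` and `C ≥ 0`. Let
`κ : ℂⁿ = ℝ^{2n} → ℝ` be measurable with `|κ(Z) − 1| ≤ C |Z|²` for all `|Z| ≤ 2ε`
(Euclidean norm, so `|Z|² = Σⱼ |zⱼ|²`). Then there is `C' > 0` such that for all real
`p ≥ 1`, `|∫_{B(0,2ε)} pⁿ e^{−2p|Z|²_a} κ(Z) dZ − ∏ⱼ (2π/aⱼ)| ≤ C'/p`, where
`|Z|²_a = ¼ Σⱼ aⱼ |zⱼ|²` and the integral is over the Euclidean ball of radius `2ε`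
with respect to the Lebesgue measure. -/
theorem stmt_10 (n : ℕ) (hn : 1 ≤ n) (a : Fin n → ℝ) (ha : ∀ j, 0 < a j)
    (ε : ℝ) (hε : 0 < ε) (C : ℝ) (hC : 0 ≤ C)
    (κ : (Fin n → ℂ) → ℝ) (hκmeas : Measurable κ)
    (hκ : ∀ Z : Fin n → ℂ, (∑ j, Complex.normSq (Z j)) ≤ (2 * ε) ^ 2 →
      |κ Z - 1| ≤ C * ∑ j, Complex.normSq (Z j)) :
    ∃ C' > 0, ∀ p : ℝ, 1 ≤ p →
      |(∫ Z in {Z : Fin n → ℂ | (∑ j, Complex.normSq (Z j)) < (2 * ε) ^ 2},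
          p ^ n * Real.exp (-(2 * p * ((1 / 4) * ∑ j, a j * Complex.normSq (Z j)))) * κ Z)
        - ∏ j, 2 * Real.pi / a j| ≤ C' / p := by
  -- basic notations
  haveI : Nonempty (Fin n) := Fin.pos_iff_nonempty.mp hn
  set S : (Fin n → ℂ) → ℝ := fun Z => ∑ j, a j * Complex.normSq (Z j) with hSdef
  set N : (Fin n → ℂ) → ℝ := fun Z => ∑ j, Complex.normSq (Z j) with hNdef
  have hN0 : ∀ Z, 0 ≤ N Z := fun Z =>
    Finset.sum_nonneg fun j _ => Complex.normSq_nonneg _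
  -- minimum of the a's
  set am : ℝ := Finset.univ.inf' Finset.univ_nonempty a with ham
  have ham_pos : 0 < am := Finset.lt_inf'_iff _ |>.mpr fun j _ => ha j
  have ham_le : ∀ j, am ≤ a j := fun j => Finset.inf'_le _ (Finset.mem_univ j)
  have hNS : ∀ Z, am * N Z ≤ S Z := by
    intro Z
    simp only [hNdef, hSdef]
    rw [Finset.mul_sum]
    exact Finset.sum_le_sum fun j _ =>
      mul_le_mul_of_nonneg_right (ham_le j) (Complex.normSq_nonneg _)
  have hS0 : ∀ Z, 0 ≤ S Z := fun Z =>
    Finset.sum_nonneg fun j _ => mul_nonneg (ha j).le (Complex.normSq_nonneg _)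
  -- measurability
  have hNmeas : Measurable N :=
    Finset.measurable_sum _ fun j _ =>
      Complex.continuous_normSq.measurable.comp (measurable_pi_apply j)
  have hSmeas : Measurable S :=
    Finset.measurable_sum _ fun j _ =>
      ((Complex.continuous_normSq.measurable.comp (measurable_pi_apply j)).const_mul (a j))
  set U : Set (Fin n → ℂ) := {Z | N Z < (2 * ε) ^ 2} with hUdef
  have hU : MeasurableSet U := measurableSet_lt hNmeas measurable_const
  -- constants
  set M : ℝ := ∏ j, 4 * Real.pi / a j with hM
  have hMpos : 0 < M := Finset.prod_pos fun j _ => div_pos (by positivity) (ha j)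
  set δ : ℝ := am * (2 * ε) ^ 2 with hδ
  have hδpos : 0 < δ := mul_pos ham_pos (by positivity)
  set K : ℝ := 1 + C * (2 * ε) ^ 2 with hK
  have hC1 : (0:ℝ) ≤ (2 * C / am) * M := mul_nonneg (div_nonneg (by linarith) ham_pos.le) hMpos.le
  have hC2 : (0:ℝ) ≤ (4 / δ) * M := mul_nonneg (div_nonneg (by norm_num) hδpos.le) hMpos.le
  refine ⟨(2 * C / am) * M + (4 / δ) * M + 1, by linarith, ?_⟩
  intro p hp
  have hp0 : (0 : ℝ) < p := lt_of_lt_of_le one_pos hp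
  -- the Gaussian and its dominating function
  set g : (Fin n → ℂ) → ℝ :=
    fun Z => p ^ n * Real.exp (-(∑ j, (p / 2 * a j) * Complex.normSq (Z j))) with hg
  set h : (Fin n → ℂ) → ℝ :=
    fun Z => p ^ n * Real.exp (-(∑ j, (p / 4 * a j) * Complex.normSq (Z j))) with hh
  have hexp : ∀ (q : ℝ) (Z : Fin n → ℂ),
      q * S Z = ∑ j, (q * a j) * Complex.normSq (Z j) := by
    intro q Z
    simp only [hSdef]
    rw [Finset.mul_sum]
    exact Finset.sum_congr rfl fun j _ => by ring
  have hgS : ∀ Z, g Z = p ^ n * Real.exp (-(p / 2 * S Z)) := by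
    intro Z; simp only [hg]; rw [hexp (p / 2) Z]
  have hhS : ∀ Z, h Z = p ^ n * Real.exp (-(p / 4 * S Z)) := by
    intro Z; simp only [hh]; rw [hexp (p / 4) Z]
  have hgpos : ∀ Z, 0 < g Z := fun Z => by
    rw [hgS Z]; positivity
  have hhpos : ∀ Z, 0 < h Z := fun Z => by
    rw [hhS Z]; positivity
  -- integrability
  have hgint : Integrable g :=
    (integrable_gauss_pi (c := fun j => p / 2 * a j) fun j => mul_pos (by positivity) (ha j)).const_mul _
  have hhint : Integrable h :=
    (integrable_gauss_pi (c := fun j => p / 4 * a j) fun j => mul_pos (by positivity) (ha j)).const_mul _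
  have hgmeas : Measurable g := by
    apply Measurable.const_mul
    exact Real.measurable_exp.comp
      ((Finset.measurable_sum _ fun j _ =>
        (Complex.continuous_normSq.measurable.comp (measurable_pi_apply j)).const_mul _).neg)
  -- values of full-space integrals
  have hprodq : ∀ q : ℝ, 0 < q →
      p ^ n * ∏ j, Real.pi / (p / q * a j) = ∏ j, q * Real.pi / a j := by
    intro q hq
    have hpn : (p : ℝ) ^ n = ∏ _j : Fin n, p := by
      simp [Finset.prod_const]
    rw [hpn, ← Finset.prod_mul_distrib]
    refine Finset.prod_congr rfl fun j _ => ?_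
    have hpne : p ≠ 0 := hp0.ne'
    have hqne : q ≠ 0 := hq.ne'
    have hane : a j ≠ 0 := (ha j).ne'
    field_simp
  have hfullg : ∫ Z, g Z = ∏ j, 2 * Real.pi / a j := by
    have h1 : ∫ Z : Fin n → ℂ, Real.exp (-(∑ j, (p / 2 * a j) * Complex.normSq (Z j)))
        = ∏ j, Real.pi / (p / 2 * a j) := by
      simpa using integral_gauss_pi (c := fun j => p / 2 * a j)
        (fun j => mul_pos (by positivity) (ha j))
    simp only [hg]
    rw [MeasureTheory.integral_const_mul, h1]
    exact hprodq 2 two_pos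
  have hfullh : ∫ Z, h Z = M := by
    have h1 : ∫ Z : Fin n → ℂ, Real.exp (-(∑ j, (p / 4 * a j) * Complex.normSq (Z j)))
        = ∏ j, Real.pi / (p / 4 * a j) := by
      simpa using integral_gauss_pi (c := fun j => p / 4 * a j)
        (fun j => mul_pos (by positivity) (ha j))
    simp only [hh]
    rw [MeasureTheory.integral_const_mul, h1]
    exact hprodq 4 four_pos
  -- integrability of g * κ on U
  have hκboundU : ∀ Z ∈ U, |κ Z| ≤ K := by
    intro Z hZ
    have hZ' : N Z ≤ (2 * ε) ^ 2 := le_of_lt hZ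
    have h1 := hκ Z hZ'
    have h2 : C * N Z ≤ C * (2 * ε) ^ 2 := mul_le_mul_of_nonneg_left hZ' hC
    calc |κ Z| ≤ |κ Z - 1| + 1 := by
          have := abs_sub_abs_le_abs_sub (κ Z) 1
          simp only [abs_one] at this
          linarith
      _ ≤ K := by rw [hK]; linarith
  have hgκint : IntegrableOn (fun Z => g Z * κ Z) U := by
    apply Integrable.mono' ((hgint.const_mul K).integrableOn)
    · exact (hgmeas.mul hκmeas).aestronglyMeasurable
    · rw [MeasureTheory.ae_restrict_iff' hU]
      filter_upwards with Z hZ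
      have := hκboundU Z hZ
      rw [Real.norm_eq_abs, abs_mul, abs_of_pos (hgpos Z)]
      calc g Z * |κ Z| ≤ g Z * K :=
            mul_le_mul_of_nonneg_left this (hgpos Z).le
        _ = K * g Z := by ring
  -- Estimate I : |∫_U g κ − ∫_U g| ≤ (2C/am) M / p
  have estI : |(∫ Z in U, g Z * κ Z) - ∫ Z in U, g Z| ≤ (2 * C / am) * M / p := by
    rw [← MeasureTheory.integral_sub hgκint hgint.integrableOn]
    have hptw : ∀ Z ∈ U, |g Z * κ Z - g Z| ≤ 2 * C / (am * p) * h Z := by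
      intro Z hZ
      have h1 : |g Z * κ Z - g Z| = g Z * |κ Z - 1| := by
        have h1a : g Z * κ Z - g Z = g Z * (κ Z - 1) := by ring
        rw [h1a, abs_mul, abs_of_pos (hgpos Z)]
      rw [h1]
      have h2 : |κ Z - 1| ≤ C * N Z := hκ Z (le_of_lt hZ)
      have h3 : C * N Z ≤ C / am * S Z := by
        rw [div_mul_eq_mul_div, le_div_iff₀ ham_pos]
        calc C * N Z * am = C * (am * N Z) := by ring
          _ ≤ C * S Z := mul_le_mul_of_nonneg_left (hNS Z) hC
      have h4 : g Z * |κ Z - 1| ≤ g Z * (C / am * S Z) :=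
        mul_le_mul_of_nonneg_left (le_trans h2 h3) (hgpos Z).le
      refine le_trans h4 ?_
      -- key Gaussian decay
      have h5 : (p / 2 * S Z) * Real.exp (-(p / 2 * S Z)) ≤ Real.exp (-(p / 4 * S Z)) := by
        have := ue_ineq (u := p / 2 * S Z) (mul_nonneg (by positivity) (hS0 Z))
        have harg : (p / 2 * S Z) / 2 = p / 4 * S Z := by ring
        rwa [harg] at this
      rw [hgS Z, hhS Z]
      have hpn0 : (0 : ℝ) ≤ p ^ n := by positivity
      have hCam : (0 : ℝ) ≤ C / am := div_nonneg hC ham_pos.le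
      have hE2 : (0 : ℝ) < Real.exp (-(p / 2 * S Z)) := Real.exp_pos _
      -- multiply h5 by 2/p * (C/am) * p^n
      have h6 : S Z * Real.exp (-(p / 2 * S Z)) ≤ 2 / p * Real.exp (-(p / 4 * S Z)) := by
        have h7 : S Z * Real.exp (-(p / 2 * S Z))
            = 2 / p * ((p / 2 * S Z) * Real.exp (-(p / 2 * S Z))) := by
          have hpne : p ≠ 0 := hp0.ne'
          field_simp
        rw [h7]
        exact mul_le_mul_of_nonneg_left h5 (by positivity)
      calc p ^ n * Real.exp (-(p / 2 * S Z)) * (C / am * S Z)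
          = (C / am) * p ^ n * (S Z * Real.exp (-(p / 2 * S Z))) := by ring
        _ ≤ (C / am) * p ^ n * (2 / p * Real.exp (-(p / 4 * S Z))) := by
            exact mul_le_mul_of_nonneg_left h6 (mul_nonneg hCam hpn0)
        _ = 2 * C / (am * p) * (p ^ n * Real.exp (-(p / 4 * S Z))) := by
            ring
    calc |∫ Z in U, (g Z * κ Z - g Z)| ≤ ∫ Z in U, |g Z * κ Z - g Z| := by
          have := MeasureTheory.norm_integral_le_integral_norm
            (μ := volume.restrict U) (fun Z => g Z * κ Z - g Z)
          simpa [Real.norm_eq_abs] using this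
      _ ≤ ∫ Z in U, 2 * C / (am * p) * h Z := by
          apply MeasureTheory.setIntegral_mono_on
            (hgκint.sub hgint.integrableOn).abs ((hhint.const_mul _).integrableOn) hU hptw
      _ ≤ ∫ Z, 2 * C / (am * p) * h Z := by
          apply MeasureTheory.setIntegral_le_integral (hhint.const_mul _)
          filter_upwards with Z
          exact mul_nonneg (div_nonneg (by linarith) (by positivity)) (hhpos Z).le
      _ = 2 * C / (am * p) * M := by
          rw [MeasureTheory.integral_const_mul, hfullh]
      _ = (2 * C / am) * M / p := by ring
  -- Estimate II : |∫_U g − ∫ g| ≤ (4/δ) M / p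
  have estII : |(∫ Z in U, g Z) - ∏ j, 2 * Real.pi / a j| ≤ (4 / δ) * M / p := by
    have hsplit := MeasureTheory.integral_add_compl hU hgint
    have h1 : (∫ Z in U, g Z) - ∏ j, 2 * Real.pi / a j = -(∫ Z in Uᶜ, g Z) := by
      rw [← hfullg, ← hsplit]
      ring
    rw [h1, abs_neg]
    set c : ℝ := Real.exp (-(p / 4 * δ)) with hc
    have hcpos : 0 < c := Real.exp_pos _
    have hptw : ∀ Z ∈ Uᶜ, g Z ≤ c * h Z := by
      intro Z hZ
      have hZ' : (2 * ε) ^ 2 ≤ N Z := by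
        simp only [hUdef, Set.mem_compl_iff, Set.mem_setOf_eq, not_lt] at hZ
        exact hZ
      have hSδ : δ ≤ S Z := by
        calc δ = am * (2 * ε) ^ 2 := hδ
          _ ≤ am * N Z := mul_le_mul_of_nonneg_left hZ' ham_pos.le
          _ ≤ S Z := hNS Z
      rw [hgS Z, hhS Z]
      have h2 : Real.exp (-(p / 2 * S Z)) ≤ c * Real.exp (-(p / 4 * S Z)) := by
        rw [hc, ← Real.exp_add]
        apply Real.exp_le_exp.mpr
        nlinarith
      calc p ^ n * Real.exp (-(p / 2 * S Z)) ≤ p ^ n * (c * Real.exp (-(p / 4 * S Z))) :=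
            mul_le_mul_of_nonneg_left h2 (by positivity)
        _ = c * (p ^ n * Real.exp (-(p / 4 * S Z))) := by ring
    have hcle : c ≤ 4 / (δ * p) := by
      have hxpos : (0 : ℝ) < p * δ / 4 := by positivity
      have hx : p * δ / 4 ≤ Real.exp (p * δ / 4) := by
        have := Real.add_one_le_exp (p * δ / 4); linarith
      have hinv : (Real.exp (p * δ / 4))⁻¹ ≤ (p * δ / 4)⁻¹ :=
        inv_anti₀ hxpos hx
      have h2 : ((p * δ / 4) : ℝ)⁻¹ = 4 / (δ * p) := by ring
      rw [hc, show -(p / 4 * δ) = -(p * δ / 4) from by ring, Real.exp_neg, ← h2]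
      exact hinv
    calc |∫ Z in Uᶜ, g Z| ≤ ∫ Z in Uᶜ, |g Z| := by
          have := MeasureTheory.norm_integral_le_integral_norm
            (μ := volume.restrict Uᶜ) g
          simpa [Real.norm_eq_abs] using this
      _ = ∫ Z in Uᶜ, g Z := by
          congr 1
          funext Z
          exact abs_of_pos (hgpos Z)
      _ ≤ ∫ Z in Uᶜ, c * h Z := by
          apply MeasureTheory.setIntegral_mono_on hgint.integrableOn
            ((hhint.const_mul _).integrableOn) hU.compl hptw
      _ ≤ ∫ Z, c * h Z := by
          apply MeasureTheory.setIntegral_le_integral (hhint.const_mul _)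
          filter_upwards with Z
          exact mul_nonneg hcpos.le (hhpos Z).le
      _ = c * M := by rw [MeasureTheory.integral_const_mul, hfullh]
      _ ≤ 4 / (δ * p) * M := mul_le_mul_of_nonneg_right hcle hMpos.le
      _ = (4 / δ) * M / p := by ring
  -- assemble
  have erw : ∀ Z : Fin n → ℂ,
      p ^ n * Real.exp (-(2 * p * ((1 / 4) * ∑ j, a j * Complex.normSq (Z j)))) * κ Z
        = g Z * κ Z := by
    intro Z
    rw [hgS Z]
    congr 3
    simp only [hSdef]
    ring
  rw [show (∫ Z in {Z : Fin n → ℂ | (∑ j, Complex.normSq (Z j)) < (2 * ε) ^ 2},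
      p ^ n * Real.exp (-(2 * p * ((1 / 4) * ∑ j, a j * Complex.normSq (Z j)))) * κ Z)
      = ∫ Z in U, g Z * κ Z from by
    apply MeasureTheory.setIntegral_congr_fun hU
    intro Z _
    exact erw Z]
  calc |(∫ Z in U, g Z * κ Z) - ∏ j, 2 * Real.pi / a j|
      ≤ |(∫ Z in U, g Z * κ Z) - ∫ Z in U, g Z|
        + |(∫ Z in U, g Z) - ∏ j, 2 * Real.pi / a j| := abs_sub_le _ _ _
    _ ≤ (2 * C / am) * M / p + (4 / δ) * M / p := add_le_add estI estII
    _ ≤ ((2 * C / am) * M + (4 / δ) * M + 1) / p := by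
        rw [← add_div]
        exact (div_le_div_iff_of_pos_right hp0).mpr (by linarith)
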